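/- Mutual information equals negative copula entropy: for a pair of continuous random variables (X,Y) with joint density f, marginal densities f_X, f_Y, marginal CDFs F_X, F_Y, and copula density c(u,v) satisfying f(x,y) = c(F_X(x), F_Y(y)) · f_X(x) · f_Y(y), the mutual information I(X;Y) = ∫∫ f(x,y) log( f(x,y) / (f_X(x) f_Y(y)) ) dx dy equals ∫∫_{[0,1]²} c(u,v) log c(u,v) du dv, i.e., I(X;Y) = -H_c(X,Y) where H_c(X,Y) = -∫∫ c log c. -/

import Mathlib

open MeasureTheory Set Filter Topology
open scoped ENNReal NNReal

/-- The pushforward of the measure with density `fX` under its CDF `FX` is the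
uniform measure on `(0,1)`. -/
lemma cdf_map_eq (fX FX : ℝ → ℝ) (hnn : ∀ x, 0 ≤ fX x) (hm : Measurable fX)
    (hi : Integrable fX) (htot : ∫ x, fX x = 1)
    (hF : ∀ x, FX x = ∫ t in Iic x, fX t) (hcont : Continuous FX) (hsm : StrictMono FX) :
    Measure.map FX (volume.withDensity (fun x => ENNReal.ofReal (fX x)))
      = volume.restrict (Ioo (0:ℝ) 1) := by
  have hnn' : (0:ℝ → ℝ) ≤ᵐ[volume] fX := Eventually.of_forall hnn
  have hle1 : ∀ x, FX x ≤ 1 := by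
    intro x
    rw [hF x, ← htot]
    exact setIntegral_le_integral hi hnn'
  have hge0 : ∀ x, 0 ≤ FX x := by
    intro x
    rw [hF x]
    exact setIntegral_nonneg measurableSet_Iic fun t _ => hnn t
  have hlt1 : ∀ x, FX x < 1 := fun x => lt_of_lt_of_le (hsm (lt_add_one x)) (hle1 _)
  have hgt0 : ∀ x, 0 < FX x := fun x => lt_of_le_of_lt (hge0 (x - 1)) (hsm (sub_one_lt x))
  -- limits of FX at ±∞ along integer sequences
  have htop : Tendsto (fun n : ℕ => FX n) atTop (𝓝 1) := by
    have hU : (⋃ n : ℕ, Iic ((n : ℝ))) = univ := by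
      apply eq_univ_of_forall
      intro x
      obtain ⟨n, hn⟩ := exists_nat_ge x
      exact mem_iUnion.2 ⟨n, hn⟩
    have := tendsto_setIntegral_of_monotone (μ := volume) (f := fX)
      (s := fun n : ℕ => Iic ((n : ℝ))) (fun n => measurableSet_Iic)
      (fun m n hmn => Iic_subset_Iic.2 (by exact_mod_cast hmn))
      (by rw [hU]; exact hi.integrableOn)
    rw [hU] at this
    simp only [Measure.restrict_univ] at this
    rw [htot] at this
    convert this using 2 with n
    exact hF _
  have hbot : Tendsto (fun n : ℕ => FX (-(n : ℝ))) atTop (𝓝 0) := by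
    have hU : (⋃ n : ℕ, Ioi (-(n : ℝ))) = univ := by
      apply eq_univ_of_forall
      intro x
      obtain ⟨n, hn⟩ := exists_nat_gt (-x)
      exact mem_iUnion.2 ⟨n, by simpa using neg_lt.1 hn⟩
    have h2 := tendsto_setIntegral_of_monotone (μ := volume) (f := fX)
      (s := fun n : ℕ => Ioi (-(n : ℝ))) (fun n => measurableSet_Ioi)
      (fun m n hmn => Ioi_subset_Ioi (by exact_mod_cast neg_le_neg (Nat.cast_le.2 hmn)))
      (by rw [hU]; exact hi.integrableOn)
    rw [hU] at h2
    simp only [Measure.restrict_univ] at h2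
    rw [htot] at h2
    have hdecomp : ∀ n : ℕ, FX (-(n : ℝ)) = 1 - ∫ t in Ioi (-(n : ℝ)), fX t := by
      intro n
      have := integral_add_compl (measurableSet_Iic (a := (-(n:ℝ)))) hi
      rw [compl_Iic, htot] at this
      rw [hF]
      linarith
    simp_rw [hdecomp]
    have := h2.const_sub 1
    simpa using this
  -- surjectivity onto (0,1)
  have hsurj : ∀ b ∈ Ioo (0:ℝ) 1, ∃ x, FX x = b := by
    rintro b ⟨hb0, hb1⟩
    obtain ⟨n₁, hn₁⟩ := (htop.eventually (eventually_gt_nhds hb1)).exists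
    obtain ⟨n₂, hn₂⟩ := (hbot.eventually (eventually_lt_nhds hb0)).exists
    have hle : (-(n₂:ℝ)) ≤ (n₁:ℝ) := le_trans (neg_nonpos.2 (Nat.cast_nonneg n₂)) (Nat.cast_nonneg n₁)
    have : b ∈ Icc (FX (-(n₂:ℝ))) (FX n₁) := ⟨hn₂.le, hn₁.le⟩
    obtain ⟨x, _, hx⟩ := intermediate_value_Icc hle hcont.continuousOn this
    exact ⟨x, hx⟩
  set μX := volume.withDensity (fun x => ENNReal.ofReal (fX x)) with hμX
  have hμX_apply : ∀ s : Set ℝ, MeasurableSet s → μX s = ENNReal.ofReal (∫ t in s, fX t) := by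
    intro s hs
    rw [hμX, withDensity_apply _ hs,
      ← ofReal_integral_eq_lintegral_ofReal hi.integrableOn
        (ae_restrict_of_ae hnn')]
  have hμX_univ : μX univ = 1 := by
    rw [hμX_apply univ MeasurableSet.univ, setIntegral_univ, htot, ENNReal.ofReal_one]
  have : IsFiniteMeasure μX := ⟨by rw [hμX_univ]; exact ENNReal.one_lt_top⟩
  have hmapfin : IsFiniteMeasure (Measure.map FX μX) := by
    constructor
    rw [Measure.map_apply hcont.measurable MeasurableSet.univ]
    simp only [preimage_univ]
    rw [hμX_univ]; exact ENNReal.one_lt_top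
  refine Measure.ext_of_Iic _ _ (fun b => ?_)
  rw [Measure.map_apply hcont.measurable measurableSet_Iic,
    Measure.restrict_apply measurableSet_Iic]
  rcases le_or_gt b 0 with hb | hb
  · have h1 : FX ⁻¹' Iic b = ∅ := by
      apply eq_empty_of_forall_notMem
      intro x hx
      exact absurd (le_trans (hx : FX x ≤ b) hb) (not_le.2 (hgt0 x))
    have h2 : Iic b ∩ Ioo (0:ℝ) 1 = ∅ := by
      apply eq_empty_of_forall_notMem
      rintro x ⟨hx1, hx2, _⟩
      exact absurd (le_trans hx1 hb) (not_le.2 hx2)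
    rw [h1, h2]; simp
  rcases le_or_gt 1 b with hb1 | hb1
  · have h1 : FX ⁻¹' Iic b = univ :=
      eq_univ_of_forall fun x => le_trans (hlt1 x).le hb1
    have h2 : Iic b ∩ Ioo (0:ℝ) 1 = Ioo 0 1 := by
      apply inter_eq_self_of_subset_right
      rintro x ⟨_, hx2⟩
      exact le_trans hx2.le hb1
    rw [h1, h2, hμX_univ, Real.volume_Ioo]
    norm_num
  · obtain ⟨x0, hx0⟩ := hsurj b ⟨hb, hb1⟩
    have h1 : FX ⁻¹' Iic b = Iic x0 := by
      ext x
      simp only [mem_preimage, mem_Iic, ← hx0]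
      exact hsm.le_iff_le
    have h2 : Iic b ∩ Ioo (0:ℝ) 1 = Ioc 0 b := by
      ext x
      simp only [mem_inter_iff, mem_Iic, mem_Ioo, mem_Ioc]
      constructor
      · rintro ⟨h1, h2, _⟩; exact ⟨h2, h1⟩
      · rintro ⟨h1, h2⟩; exact ⟨h2, h1, lt_of_le_of_lt h2 hb1⟩
    rw [h1, h2, hμX_apply _ measurableSet_Iic, ← hF, hx0, Real.volume_Ioc]
    norm_num

/-- Change of variables through the CDF. -/
lemma cdf_integral_eq (fX FX : ℝ → ℝ) (hnn : ∀ x, 0 ≤ fX x) (hm : Measurable fX)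
    (hi : Integrable fX) (htot : ∫ x, fX x = 1)
    (hF : ∀ x, FX x = ∫ t in Iic x, fX t) (hcont : Continuous FX) (hsm : StrictMono FX)
    (g : ℝ → ℝ) (hg : AEStronglyMeasurable g (volume.restrict (Ioo (0:ℝ) 1))) :
    ∫ x, g (FX x) * fX x = ∫ u in Ioo (0:ℝ) 1, g u := by
  have hmap := cdf_map_eq fX FX hnn hm hi htot hF hcont hsm
  have h1 : (∫ u in Ioo (0:ℝ) 1, g u)
      = ∫ u, g u ∂(Measure.map FX (volume.withDensity (fun x => ENNReal.ofReal (fX x)))) := by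
    rw [hmap]
  rw [h1, integral_map hcont.measurable.aemeasurable (by rw [hmap]; exact hg)]
  have h2 : (fun x : ℝ => ENNReal.ofReal (fX x)) = fun x => ((fX x).toNNReal : ℝ≥0∞) := rfl
  rw [h2, integral_withDensity_eq_integral_smul hm.real_toNNReal]
  congr 1
  ext x
  rw [NNReal.smul_def, Real.coe_toNNReal _ (hnn x), smul_eq_mul, mul_comm]

/-- Mutual information equals negative copula entropy:
if the joint density factors through a copula density,
then `I(X;Y) = ∫∫_{[0,1]²} c log c = -H_c(X,Y)`. -/
theorem mutual_information_eq_neg_copula_entropy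
    (f : ℝ × ℝ → ℝ) (fX fY FX FY : ℝ → ℝ) (c : ℝ × ℝ → ℝ)
    (hf_nonneg : ∀ p, 0 ≤ f p) (hfX_nonneg : ∀ x, 0 ≤ fX x)
    (hfY_nonneg : ∀ y, 0 ≤ fY y) (hc_nonneg : ∀ u, 0 ≤ c u)
    (hf_meas : Measurable f) (hc_meas : Measurable c)
    (hf_prob : ∫ p, f p = 1)
    (hmargX : ∀ x, fX x = ∫ y, f (x, y)) (hmargY : ∀ y, fY y = ∫ x, f (x, y))
    (hFX : ∀ x, FX x = ∫ t in Iic x, fX t) (hFY : ∀ y, FY y = ∫ t in Iic y, fY t)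
    (hFXc : Continuous FX) (hFYc : Continuous FY)
    (hFXm : StrictMono FX) (hFYm : StrictMono FY)
    (hfac : ∀ᵐ p : ℝ × ℝ, f p = c (FX p.1, FY p.2) * fX p.1 * fY p.2)
    (hint : Integrable (fun p : ℝ × ℝ => f p * Real.log (f p / (fX p.1 * fY p.2))))
    (hintc : IntegrableOn (fun u : ℝ × ℝ => c u * Real.log (c u))
      (Icc (0:ℝ) 1 ×ˢ Icc (0:ℝ) 1)) :
    ∫ p : ℝ × ℝ, f p * Real.log (f p / (fX p.1 * fY p.2))
      = ∫ u in Icc (0:ℝ) 1 ×ˢ Icc (0:ℝ) 1, c u * Real.log (c u) := by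
  -- basic facts about f, fX, fY
  have hfint : Integrable f := by
    by_contra h
    rw [integral_undef h] at hf_prob
    norm_num at hf_prob
  have hfprod : Integrable f ((volume : Measure ℝ).prod volume) := by
    rwa [← Measure.volume_eq_prod]
  have hfXeq : fX = fun x => ∫ y, f (x, y) := funext hmargX
  have hfYeq : fY = fun y => ∫ x, f (x, y) := funext hmargY
  have hfX_sm : StronglyMeasurable fX := by
    rw [hfXeq]; exact hf_meas.stronglyMeasurable.integral_prod_right'
  have hfY_sm : StronglyMeasurable fY := by
    rw [hfYeq]; exact hf_meas.stronglyMeasurable.integral_prod_left'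
  have hfX_int : Integrable fX := by
    rw [hfXeq]; exact hfprod.integral_prod_left
  have hfY_int : Integrable fY := by
    rw [hfYeq]; exact hfprod.integral_prod_right
  have hfX_tot : ∫ x, fX x = 1 := by
    rw [hfXeq, ← integral_prod f hfprod, ← Measure.volume_eq_prod, hf_prob]
  have hfY_tot : ∫ y, fY y = 1 := by
    have hswap : Integrable (Function.uncurry fun x y => f (x, y)) ((volume : Measure ℝ).prod volume) := by
      exact hfprod
    rw [hfYeq]
    have h := integral_integral_swap hswap
    rw [← h, integral_integral hswap]
    simpa [Function.uncurry, ← Measure.volume_eq_prod] using hf_prob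
  -- the transformed integrand
  set G : ℝ × ℝ → ℝ := fun q => c q * Real.log (c q) with hG
  have hGmeas : Measurable G := hc_meas.mul (Real.measurable_log.comp hc_meas)
  have hae : (fun p : ℝ × ℝ => f p * Real.log (f p / (fX p.1 * fY p.2)))
      =ᵐ[volume] fun p => G (FX p.1, FY p.2) * (fX p.1 * fY p.2) := by
    filter_upwards [hfac] with p hp
    by_cases h : fX p.1 * fY p.2 = 0
    · rw [hp]
      rcases mul_eq_zero.1 h with h' | h' <;> rw [h'] <;> ring
    · rw [hp]
      have hdiv : c (FX p.1, FY p.2) * fX p.1 * fY p.2 / (fX p.1 * fY p.2)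
          = c (FX p.1, FY p.2) := by
        rw [mul_assoc, mul_div_assoc, div_self h, mul_one]
      rw [hdiv, hG]
      ring
  rw [integral_congr_ae hae]
  have hHint : Integrable (fun p : ℝ × ℝ => G (FX p.1, FY p.2) * (fX p.1 * fY p.2)) :=
    hint.congr hae
  have hHint' : Integrable (fun p : ℝ × ℝ => G (FX p.1, FY p.2) * (fX p.1 * fY p.2))
      ((volume : Measure ℝ).prod volume) := by rwa [← Measure.volume_eq_prod]
  -- iterated integral
  rw [Measure.volume_eq_prod, integral_prod _ hHint']
  -- inner integral
  have hinner : ∀ x : ℝ, (∫ y, G (FX x, FY y) * (fX x * fY y))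
      = fX x * ∫ v in Ioo (0:ℝ) 1, G (FX x, v) := by
    intro x
    have : ∀ y : ℝ, G (FX x, FY y) * (fX x * fY y) = fX x * (G (FX x, FY y) * fY y) := by
      intro y; ring
    simp_rw [this, integral_const_mul]
    congr 1
    exact cdf_integral_eq fY FY hfY_nonneg hfY_sm.measurable hfY_int hfY_tot hFY hFYc hFYm
      (fun v => G (FX x, v))
      ((hGmeas.comp (measurable_const.prodMk measurable_id)).aestronglyMeasurable)
  simp_rw [hinner]
  -- outer integral
  set h0 : ℝ → ℝ := fun u => ∫ v in Ioo (0:ℝ) 1, G (u, v) with hh0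
  have hh0_sm : StronglyMeasurable h0 :=
    hGmeas.stronglyMeasurable.integral_prod_right'
  have houter : (∫ x, fX x * h0 (FX x)) = ∫ u in Ioo (0:ℝ) 1, h0 u := by
    simp_rw [mul_comm (fX _)]
    exact cdf_integral_eq fX FX hfX_nonneg hfX_sm.measurable hfX_int hfX_tot hFX hFXc hFXm
      h0 hh0_sm.aestronglyMeasurable
  rw [houter]
  -- back to an integral over the square
  have hGint : IntegrableOn G (Ioo (0:ℝ) 1 ×ˢ Ioo (0:ℝ) 1) :=
    hintc.mono_set (prod_mono Ioo_subset_Icc_self Ioo_subset_Icc_self)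
  have hrestr : (volume : Measure (ℝ × ℝ)).restrict (Ioo (0:ℝ) 1 ×ˢ Ioo (0:ℝ) 1)
      = ((volume : Measure ℝ).restrict (Ioo (0:ℝ) 1)).prod
        ((volume : Measure ℝ).restrict (Ioo (0:ℝ) 1)) := by
    rw [Measure.volume_eq_prod, Measure.prod_restrict]
  have hGint2 : Integrable G (((volume : Measure ℝ).restrict (Ioo (0:ℝ) 1)).prod
      ((volume : Measure ℝ).restrict (Ioo (0:ℝ) 1))) := by
    rwa [← hrestr]
  have hsq : (∫ u in Ioo (0:ℝ) 1, h0 u) = ∫ q in Ioo (0:ℝ) 1 ×ˢ Ioo (0:ℝ) 1, G q := by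
    rw [hrestr, integral_prod _ hGint2]
  rw [hsq]
  -- Icc vs Ioo boundary
  have hnull : (Icc (0:ℝ) 1 ×ˢ Icc (0:ℝ) 1 : Set (ℝ × ℝ))
      =ᵐ[volume] (Ioo (0:ℝ) 1 ×ˢ Ioo (0:ℝ) 1 : Set (ℝ × ℝ)) := by
    have h1 : (Icc (0:ℝ) 1 ×ˢ Icc (0:ℝ) 1 : Set (ℝ × ℝ)) \ (Ioo (0:ℝ) 1 ×ˢ Ioo (0:ℝ) 1)
        ⊆ (({0, 1} : Set ℝ) ×ˢ (univ : Set ℝ)) ∪ ((univ : Set ℝ) ×ˢ ({0, 1} : Set ℝ)) := by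
      rintro ⟨x, y⟩ ⟨⟨hx, hy⟩, hnot⟩
      simp only [mem_prod, mem_Ioo, not_and] at hnot
      by_cases hx' : 0 < x ∧ x < 1
      · right
        refine ⟨mem_univ _, ?_⟩
        have hy' : ¬(0 < y ∧ y < 1) := fun h => hnot ⟨hx'.1, hx'.2⟩ h.1 h.2
        rcases hy.1.lt_or_eq with h0 | h0
        · rcases hy.2.lt_or_eq with h1' | h1'
          · exact absurd ⟨h0, h1'⟩ hy'
          · exact Or.inr h1'
        · exact Or.inl h0.symm
      · left
        refine ⟨?_, mem_univ _⟩
        push_neg at hx'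
        rcases hx.1.lt_or_eq with h0 | h0
        · rcases hx.2.lt_or_eq with h1' | h1'
          · exact absurd (hx' h0) (not_le.2 h1')
          · exact Or.inr h1'
        · exact Or.inl h0.symm
    have h2 : volume ((({0, 1} : Set ℝ) ×ˢ (univ : Set ℝ))
        ∪ ((univ : Set ℝ) ×ˢ ({0, 1} : Set ℝ))) = 0 := by
      apply le_antisymm _ zero_le
      refine le_trans (measure_union_le _ _) ?_
      rw [Measure.volume_eq_prod, Measure.prod_prod, Measure.prod_prod]
      have hz : volume ({0, 1} : Set ℝ) = 0 :=
        ((Set.finite_singleton (1:ℝ)).insert 0).measure_zero volume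
      simp [hz]
    have hsub : (Ioo (0:ℝ) 1 ×ˢ Ioo (0:ℝ) 1 : Set (ℝ × ℝ))
        ⊆ Icc (0:ℝ) 1 ×ˢ Icc (0:ℝ) 1 :=
      prod_mono Ioo_subset_Icc_self Ioo_subset_Icc_self
    rw [ae_eq_set]
    constructor
    · exact measure_mono_null h1 h2
    · rw [diff_eq_empty.2 hsub]
      exact measure_empty
  rw [Measure.volume_eq_prod] at hnull
  exact (setIntegral_congr_set hnull).symm
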